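/- Let θ⁰, θ¹, θᵗ, θ₁^∞, θ₂^∞, θ₃^∞ ∈ ℂ satisfy the Fuchs relation 2(θ⁰+θ¹+θᵗ+θ₁^∞)+θ₂^∞+θ₃^∞ = 0, and assume θ₁^∞ ≠ θ₂^∞ and θ₁^∞ ≠ θ₃^∞. Set θ = θ⁰+θ¹+θᵗ, Θ = diag(θ₂^∞, θ₃^∞), and let t ∈ ℂ, t ≠ 0. Let Q, P ∈ M₂(ℂ) satisfy [P, Q] = (θ + θ₁^∞)I₂ + Θ. Define Â₀ = (I₂; O₂)·(θ⁰I₂, (1/t)Q − I₂), Â₁ = (I₂; PQ−Θ)·(θ¹I₂ − PQ + Θ, I₂), Âₜ = (I₂; tP)·(θᵗI₂ + QP, −(1/t)Q), Z = (θ₁^∞I₂ − Θ)⁻¹·[−θ¹(QP + θ + θ₁^∞) + (QP + θ + θ₁^∞)² − t(PQ + θᵗ)P], and X = [[I₂, O₂],[Z, I₂]] (2×2 block form). Then X⁻¹(Â₀ + Â₁ + Âₜ)X = −diag(θ₁^∞, θ₁^∞, θ₂^∞, θ₃^∞). -/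

import Mathlib

/-!
The residue at infinity of the Fuchsian system of spectral type 22,22,22,211:
`X⁻¹ (Â₀ + Â₁ + Âₜ) X = -diag(θ₁^∞, θ₁^∞, θ₂^∞, θ₃^∞)`.
`(X; Y)` is `Matrix.fromRows X Y` and `(X, Y)` is `Matrix.fromColumns X Y`.
-/

open Matrix

theorem residue_at_infinity_of_matrix_PVI
    (θ0 θ1 θt θi1 θi2 θi3 : ℂ)
    (hFuchs : 2 * (θ0 + θ1 + θt + θi1) + θi2 + θi3 = 0)
    (h12 : θi1 ≠ θi2) (h13 : θi1 ≠ θi3)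
    (θ : ℂ) (hθ : θ = θ0 + θ1 + θt)
    (Θ : Matrix (Fin 2) (Fin 2) ℂ) (hΘ : Θ = Matrix.diagonal ![θi2, θi3])
    (t : ℂ) (ht : t ≠ 0)
    (Q P : Matrix (Fin 2) (Fin 2) ℂ)
    (hcomm : P * Q - Q * P = (θ + θi1) • (1 : Matrix (Fin 2) (Fin 2) ℂ) + Θ)
    (A0 A1 At : Matrix (Fin 2 ⊕ Fin 2) (Fin 2 ⊕ Fin 2) ℂ)
    (hA0 : A0 = fromRows (1 : Matrix (Fin 2) (Fin 2) ℂ) (0 : Matrix (Fin 2) (Fin 2) ℂ) *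
      fromCols (θ0 • (1 : Matrix (Fin 2) (Fin 2) ℂ)) (t⁻¹ • Q - 1))
    (hA1 : A1 = fromRows (1 : Matrix (Fin 2) (Fin 2) ℂ) (P * Q - Θ) *
      fromCols (θ1 • (1 : Matrix (Fin 2) (Fin 2) ℂ) - P * Q + Θ) (1 : Matrix (Fin 2) (Fin 2) ℂ))
    (hAt : At = fromRows (1 : Matrix (Fin 2) (Fin 2) ℂ) (t • P) *
      fromCols (θt • (1 : Matrix (Fin 2) (Fin 2) ℂ) + Q * P) (-(t⁻¹ • Q)))
    (Z : Matrix (Fin 2) (Fin 2) ℂ)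
    (hZ : Z = (θi1 • (1 : Matrix (Fin 2) (Fin 2) ℂ) - Θ)⁻¹ *
      (-(θ1 • (Q * P + (θ + θi1) • (1 : Matrix (Fin 2) (Fin 2) ℂ)))
        + (Q * P + (θ + θi1) • (1 : Matrix (Fin 2) (Fin 2) ℂ)) ^ 2
        - t • ((P * Q + θt • (1 : Matrix (Fin 2) (Fin 2) ℂ)) * P)))
    (X : Matrix (Fin 2 ⊕ Fin 2) (Fin 2 ⊕ Fin 2) ℂ)
    (hX : X = fromBlocks 1 0 Z 1) :
    X⁻¹ * (A0 + A1 + At) * X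
      = -(fromBlocks (θi1 • (1 : Matrix (Fin 2) (Fin 2) ℂ)) 0 0 Θ) := by
  have hPQ : P * Q = Q * P + ((θ + θi1) • (1 : Matrix (Fin 2) (Fin 2) ℂ) + Θ) := by
    rw [← hcomm]; abel
  -- the invertible diagonal matrix
  have hD : θi1 • (1 : Matrix (Fin 2) (Fin 2) ℂ) - Θ
      = Matrix.diagonal ![θi1 - θi2, θi1 - θi3] := by
    rw [hΘ]
    ext i j
    fin_cases i <;> fin_cases j <;>
      simp [Matrix.diagonal, Matrix.one_apply]
  have hdet : IsUnit ((θi1 • (1 : Matrix (Fin 2) (Fin 2) ℂ) - Θ).det) := by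
    rw [hD, Matrix.det_fin_two]
    simp [Matrix.diagonal]
    exact ⟨sub_ne_zero.mpr h12, sub_ne_zero.mpr h13⟩
  have hDZ : (θi1 • (1 : Matrix (Fin 2) (Fin 2) ℂ) - Θ) * Z
      = (-(θ1 • (Q * P + (θ + θi1) • (1 : Matrix (Fin 2) (Fin 2) ℂ)))
        + (Q * P + (θ + θi1) • (1 : Matrix (Fin 2) (Fin 2) ℂ)) ^ 2
        - t • ((P * Q + θt • (1 : Matrix (Fin 2) (Fin 2) ℂ)) * P)) := by
    rw [hZ, ← Matrix.mul_assoc, Matrix.mul_nonsing_inv _ hdet, Matrix.one_mul]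
  -- inverse of X
  have hXinv : X⁻¹ = fromBlocks 1 0 (-Z) 1 := by
    apply Matrix.inv_eq_right_inv
    rw [hX, fromBlocks_multiply]
    simp [fromBlocks_one]
  -- sum of residues
  have hS : A0 + A1 + At = fromBlocks (-(θi1 • (1 : Matrix (Fin 2) (Fin 2) ℂ))) 0
      ((P * Q - Θ) * (θ1 • (1 : Matrix (Fin 2) (Fin 2) ℂ) - P * Q + Θ)
        + (t • P) * (θt • (1 : Matrix (Fin 2) (Fin 2) ℂ) + Q * P)) (-Θ) := by
    rw [hA0, hA1, hAt, fromRows_mul_fromCols, fromRows_mul_fromCols,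
      fromRows_mul_fromCols, fromBlocks_add, fromBlocks_add]
    rw [fromBlocks_inj]
    refine ⟨?_, ?_, ?_, ?_⟩
    · rw [hPQ, hθ]
      simp only [Matrix.one_mul]
      module
    · simp only [Matrix.one_mul]
      abel
    · simp [Matrix.zero_mul]
    · simp only [Matrix.zero_mul, Matrix.one_mul, zero_add, Matrix.mul_one]
      rw [Matrix.mul_neg, Matrix.smul_mul, Matrix.mul_smul, smul_smul,
        mul_inv_cancel₀ ht, one_smul]
      abel
  rw [hXinv, hS, hX, fromBlocks_multiply, fromBlocks_multiply, fromBlocks_neg]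
  rw [fromBlocks_inj]
  refine ⟨by simp, by simp, ?_, by simp⟩
  simp only [Matrix.one_mul, Matrix.mul_one, Matrix.zero_mul, Matrix.mul_zero,
    add_zero, zero_add, Matrix.neg_mul, Matrix.mul_neg, neg_zero]
  -- goal: lower-left block is 0
  have key : (θi1 • (1 : Matrix (Fin 2) (Fin 2) ℂ) - Θ) * Z
      + ((P * Q - Θ) * (θ1 • (1 : Matrix (Fin 2) (Fin 2) ℂ) - P * Q + Θ)
        + (t • P) * (θt • (1 : Matrix (Fin 2) (Fin 2) ℂ) + Q * P)) = 0 := by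
    have hM : P * Q - Θ = Q * P + (θ + θi1) • (1 : Matrix (Fin 2) (Fin 2) ℂ) := by
      rw [hPQ]; abel
    have h2 : θ1 • (1 : Matrix (Fin 2) (Fin 2) ℂ) - P * Q + Θ
        = θ1 • (1 : Matrix (Fin 2) (Fin 2) ℂ)
          - (Q * P + (θ + θi1) • (1 : Matrix (Fin 2) (Fin 2) ℂ)) := by
      rw [hPQ]; abel
    rw [hDZ, hM, h2]
    simp only [sq]
    simp only [mul_add, add_mul, mul_sub, sub_mul, Matrix.mul_smul, Matrix.smul_mul,
      smul_smul, Matrix.mul_one, Matrix.one_mul, smul_add, smul_sub, neg_add, neg_sub,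
      Matrix.mul_assoc]
    module
  simp only [Matrix.sub_mul, Matrix.smul_mul, Matrix.mul_smul, Matrix.mul_one,
    Matrix.one_mul, neg_neg] at key ⊢
  rw [← key]
  abel
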